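/- Let S = {L_1, ..., L_r} be a set of pairwise non-proportional real linear forms evincing the real symmetric rank of a real homogeneous polynomial P of degree d, and let E ⊊ S be a proper subset. Write P = Q + R where Q is in the real span of {L^d : L ∈ E} and R in the real span of {L^d : L ∈ S \ E}. Then S \ E evinces the real symmetric rank of R, i.e. r_ℝ(R) = r - #E. -/

import Mathlib

open MvPolynomial

/-- The real symmetric rank of `P` with respect to degree `d`. -/
noncomputable def rRank {n : ℕ} (d : ℕ) (P : MvPolynomial (Fin n) ℝ) : ℕ :=
  sInf {r : ℕ | ∃ (c : Fin r → ℝ) (L : Fin r → MvPolynomial (Fin n) ℝ),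
    (∀ i, c i ≠ 0) ∧ (∀ i, (L i).IsHomogeneous 1) ∧ P = ∑ i, c i • L i ^ d}

/-- The defining set of `rRank`. -/
def rankSet {n : ℕ} (d : ℕ) (P : MvPolynomial (Fin n) ℝ) : Set ℕ :=
  {r : ℕ | ∃ (c : Fin r → ℝ) (L : Fin r → MvPolynomial (Fin n) ℝ),
    (∀ i, c i ≠ 0) ∧ (∀ i, (L i).IsHomogeneous 1) ∧ P = ∑ i, c i • L i ^ d}

lemma rRank_eq_sInf {n : ℕ} (d : ℕ) (P : MvPolynomial (Fin n) ℝ) :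
    rRank d P = sInf (rankSet d P) := rfl

/-- From a (possibly zero-coefficient) representation we get an element of the rank set. -/
lemma exists_mem_rankSet {n d k : ℕ} {X : MvPolynomial (Fin n) ℝ}
    (c : Fin k → ℝ) (L : Fin k → MvPolynomial (Fin n) ℝ)
    (hL : ∀ i, (L i).IsHomogeneous 1) (hX : X = ∑ i, c i • L i ^ d) :
    ∃ k' ≤ k, k' ∈ rankSet d X := by
  classical
  set s : Finset (Fin k) := Finset.univ.filter (fun i => c i ≠ 0) with hs
  have hXs : X = ∑ i ∈ s, c i • L i ^ d := by
    rw [hX]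
    rw [hs]
    rw [Finset.sum_filter_of_ne]
    intro i _ h
    intro hc
    apply h
    rw [hc, zero_smul]
  refine ⟨s.card, ?_, ?_⟩
  · exact le_trans (Finset.card_filter_le _ _) (by simp)
  · refine ⟨fun i => c (s.equivFin.symm i), fun i => L (s.equivFin.symm i), ?_, fun i => hL _, ?_⟩
    · intro i
      have := (s.equivFin.symm i).2
      simp only [hs, Finset.mem_filter] at this
      exact this.2
    · rw [hXs]
      rw [← Finset.sum_coe_sort s (fun i => c i • L i ^ d)]
      exact (Equiv.sum_comp s.equivFin.symm (fun j : s => c (j : Fin k) • L (j : Fin k) ^ d)).symm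

lemma finRepr_of_span {n d : ℕ} {X : MvPolynomial (Fin n) ℝ}
    {T : Finset (MvPolynomial (Fin n) ℝ)}
    (hX : X ∈ Submodule.span ℝ ((fun L => L ^ d) '' (T : Set _))) :
    ∃ k ≤ T.card, ∃ (c : Fin k → ℝ) (L : Fin k → MvPolynomial (Fin n) ℝ),
      (∀ i, L i ∈ T) ∧ X = ∑ i, c i • L i ^ d := by
  classical
  have h1 : X ∈ Submodule.span ℝ ((T.image (fun L => L ^ d) : Finset _) : Set _) := by
    rwa [Finset.coe_image]
  obtain ⟨f, -, hf⟩ := Submodule.mem_span_finset.mp h1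
  set I := T.image (fun L => L ^ d) with hI
  have hpre : ∀ y : I, ∃ L ∈ T, L ^ d = (y : MvPolynomial (Fin n) ℝ) :=
    fun y => Finset.mem_image.mp y.2
  choose g hg1 hg2 using hpre
  refine ⟨I.card, Finset.card_image_le, fun i => f (I.equivFin.symm i : MvPolynomial (Fin n) ℝ),
    fun i => g (I.equivFin.symm i), fun i => hg1 _, ?_⟩
  calc X = ∑ y ∈ I, f y • y := hf.symm
    _ = ∑ y : I, f (y : MvPolynomial (Fin n) ℝ) • (y : MvPolynomial (Fin n) ℝ) :=
        (Finset.sum_coe_sort _ _).symm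
    _ = ∑ i : Fin I.card, f (I.equivFin.symm i : MvPolynomial (Fin n) ℝ) •
          ((I.equivFin.symm i : MvPolynomial (Fin n) ℝ)) :=
        (Equiv.sum_comp I.equivFin.symm _).symm
    _ = _ := by simp_rw [hg2]

theorem real_rank_of_partial_point {m d : ℕ} (P Q R : MvPolynomial (Fin (m + 1)) ℝ)
    (hP : P.IsHomogeneous d)
    (S : Finset (MvPolynomial (Fin (m + 1)) ℝ))
    (hS1 : ∀ L ∈ S, L.IsHomogeneous 1)
    (hSprop : ∀ L ∈ S, ∀ L' ∈ S, L ≠ L' → ∀ a : ℝ, L ≠ a • L')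
    (hPS : P ∈ Submodule.span ℝ ((fun L => L ^ d) '' (S : Set _)))
    (hcard : S.card = rRank d P)
    (E : Finset (MvPolynomial (Fin (m + 1)) ℝ)) (hES : E ⊆ S) (hEne : E ≠ S)
    (hQ : Q ∈ Submodule.span ℝ ((fun L => L ^ d) '' (E : Set _)))
    (hR : R ∈ Submodule.span ℝ ((fun L => L ^ d) '' ((S \ E : Finset _) : Set _)))
    (hQR : P = Q + R) :
    rRank d R = S.card - E.card := by
  classical
  -- upper bound: rRank d R ≤ (S \ E).card
  obtain ⟨k1, hk1, c1, L1, hL1mem, hR1⟩ := finRepr_of_span hR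
  have hL1hom : ∀ i, (L1 i).IsHomogeneous 1 := fun i =>
    hS1 _ (Finset.mem_sdiff.mp (hL1mem i)).1
  obtain ⟨r1, hr1le, hr1mem⟩ := exists_mem_rankSet c1 L1 hL1hom hR1
  have hub : rRank d R ≤ (S \ E).card :=
    le_trans (Nat.sInf_le hr1mem) (le_trans hr1le hk1)
  -- the rank of R is attained
  have hmin : rRank d R ∈ rankSet d R := Nat.sInf_mem ⟨r1, hr1mem⟩
  obtain ⟨c2, L2, hc2, hL2hom, hR2⟩ := hmin
  -- representation of Q
  obtain ⟨k3, hk3, c3, L3, hL3mem, hQ3⟩ := finRepr_of_span hQ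
  have hL3hom : ∀ i, (L3 i).IsHomogeneous 1 := fun i => hS1 _ (hES (hL3mem i))
  -- combined representation of P
  have hhom : ∀ i : Fin (k3 + rRank d R),
      (Sum.elim L3 L2 (finSumFinEquiv.symm i)).IsHomogeneous 1 := by
    intro i
    cases h : finSumFinEquiv.symm i with
    | inl a => simpa using hL3hom a
    | inr b => simpa using hL2hom b
  have hPsum : P = ∑ i : Fin (k3 + rRank d R),
      Sum.elim c3 c2 (finSumFinEquiv.symm i) • Sum.elim L3 L2 (finSumFinEquiv.symm i) ^ d := by
    rw [hQR, hQ3]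
    conv_lhs => rw [hR2]
    rw [Equiv.sum_comp finSumFinEquiv.symm
      (fun j : Fin k3 ⊕ Fin (rRank d R) => Sum.elim c3 c2 j • Sum.elim L3 L2 j ^ d)]
    rw [Fintype.sum_sum_type]
    simp
  obtain ⟨rP, hrPle, hrPmem⟩ := exists_mem_rankSet _ _ hhom hPsum
  have hlb : S.card ≤ k3 + rRank d R := by
    rw [hcard, rRank_eq_sInf]
    exact le_trans (Nat.sInf_le hrPmem) hrPle
  have hEle : E.card ≤ S.card := Finset.card_le_card hES
  have hsd : (S \ E).card = S.card - E.card := Finset.card_sdiff_of_subset hES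
  omega
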